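/- Let K ⊆ ℝⁿ be a proper cone and A ∈ π(K) be K-irreducible, with compact base B of K. Then there exists δ > 0 such that for every matrix S ∈ π(K), every c > 0, and every x ∈ B with Sx ∈ cB, the spectral radius satisfies r((I+A)^{n-1} S) > δc. -/

import Mathlib

open Matrix Set
noncomputable section

variable {n : ℕ}

/-- A proper cone: convex, a cone, pointed, closed, with nonempty interior. -/
def IsProperCone (K : Set (Fin n → ℝ)) : Prop :=
  Convex ℝ K ∧ (∀ (r : ℝ), 0 < r → ∀ x ∈ K, r • x ∈ K) ∧
    K ∩ (-K) = {0} ∧ IsClosed K ∧ (interior K).Nonempty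

/-- A compact base of the cone `K`. -/
def IsCompactBase (K B : Set (Fin n → ℝ)) : Prop :=
  IsCompact B ∧ (0 : Fin n → ℝ) ∉ closure B ∧
    K = {y | ∃ r : ℝ, 0 ≤ r ∧ ∃ x ∈ B, y = r • x}

/-- A face of the cone `K`: a subcone such that `x ∈ F`, `0 ≤_K y ≤_K x` implies `y ∈ F`. -/
def IsFace (K F : Set (Fin n → ℝ)) : Prop :=
  F ⊆ K ∧ (∀ (r : ℝ), 0 < r → ∀ x ∈ F, r • x ∈ F) ∧
    (∀ x ∈ F, ∀ y ∈ K, x - y ∈ K → y ∈ F)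

/-- `A ∈ π(K)`, i.e. `A K ⊆ K`. -/
def MapsCone (A : Matrix (Fin n) (Fin n) ℝ) (K : Set (Fin n → ℝ)) : Prop :=
  ∀ x ∈ K, A.mulVec x ∈ K

/-- `A` is `K`-irreducible: `A ∈ π(K)` and `A` leaves no nontrivial face of `K` invariant. -/
def KIrreducible (K : Set (Fin n → ℝ)) (A : Matrix (Fin n) (Fin n) ℝ) : Prop :=
  MapsCone A K ∧ ∀ F : Set (Fin n → ℝ), IsFace K F → F ≠ {0} → F ≠ K →
    ¬ (A.mulVec '' F ⊆ F)

/-- Spectral radius: the maximum modulus of complex eigenvalues of a real matrix. -/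
def specRad (A : Matrix (Fin n) (Fin n) ℝ) : ℝ :=
  sSup ((fun z : ℂ => ‖z‖) '' spectrum ℂ (A.map (algebraMap ℝ ℂ)))

/-- Operator norm of a matrix induced by the reference norm on `Fin n → ℝ`. -/
def opNorm (A : Matrix (Fin n) (Fin n) ℝ) : ℝ :=
  ‖LinearMap.toContinuousLinearMap A.mulVecLin‖

/-- The set of products of `t` elements of `M` (the time-`t` evolution operators). -/
def ProdSet (M : Set (Matrix (Fin n) (Fin n) ℝ)) : ℕ → Set (Matrix (Fin n) (Fin n) ℝ)
  | 0 => {1}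
  | (t + 1) => {P | ∃ A ∈ M, ∃ Q ∈ ProdSet M t, P = A * Q}

/-- The joint spectral radius of the discrete-time semigroup generated by `M`. -/
def jsr (M : Set (Matrix (Fin n) (Fin n) ℝ)) : ℝ :=
  ⨅ t : {t : ℕ // 0 < t}, (sSup (opNorm '' ProdSet M t.1)) ^ ((t.1 : ℝ)⁻¹)

/-- `N` is a norm on `Fin n → ℝ`. -/
def IsNorm (N : (Fin n → ℝ) → ℝ) : Prop :=
  (∀ x, N x = 0 → x = 0) ∧ (∀ (c : ℝ) (x), N (c • x) = |c| * N x) ∧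
    (∀ x y, N (x + y) ≤ N x + N y)

/-- The operator norm on matrices induced by a vector norm `v`. -/
def vop (v : (Fin n → ℝ) → ℝ) (A : Matrix (Fin n) (Fin n) ℝ) : ℝ :=
  sSup ((fun x => v (A.mulVec x)) '' {x | v x ≤ 1})

/-- The joint spectral radius computed via the matrix norm `vop v`. -/
def jsrWith (v : (Fin n → ℝ) → ℝ) (M : Set (Matrix (Fin n) (Fin n) ℝ)) : ℝ :=
  ⨅ t : {t : ℕ // 0 < t}, (sSup (vop v '' ProdSet M t.1)) ^ ((t.1 : ℝ)⁻¹)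

/-- Hausdorff distance between sets of matrices w.r.t. the matrix norm `ν`. -/
def hausdorffWith (ν : Matrix (Fin n) (Fin n) ℝ → ℝ)
    (M N : Set (Matrix (Fin n) (Fin n) ℝ)) : ℝ :=
  max (sSup ((fun B => sInf ((fun A => ν (A - B)) '' M)) '' N))
      (sSup ((fun A => sInf ((fun B => ν (A - B)) '' N)) '' M))

/-- Eccentricity of a norm `v` relative to the reference norm. -/
def ecc (v : (Fin n → ℝ) → ℝ) : ℝ :=
  sSup (v '' {x : Fin n → ℝ | ‖x‖ = 1}) / sInf (v '' {x : Fin n → ℝ | ‖x‖ = 1})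

/-- `K`-absolute value w.r.t. the simplicial cone generated by the basis `b`. -/
def absK (b : Module.Basis (Fin n) ℝ (Fin n → ℝ)) (x : Fin n → ℝ) : Fin n → ℝ :=
  ∑ i, |b.repr x i| • b i

open Filter Topology
section Stmt18Aux

attribute [local instance] Matrix.linftyOpNormedRing Matrix.linftyOpNormedAlgebra
  Matrix.linftyOpNormedAddCommGroup

lemma stmt18_norm_map_mulVec (Q : Matrix (Fin n) (Fin n) ℝ) (v : Fin n → ℝ) :
    ‖(Q.map (algebraMap ℝ ℂ)).mulVec ((fun r : ℝ => (r : ℂ)) ∘ v)‖ = ‖Q.mulVec v‖ := by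
  simp only [Pi.norm_def, Pi.nnnorm_def]
  congr 1
  apply Finset.sup_congr rfl
  intro i _
  have h := (RingHom.map_mulVec (algebraMap ℝ ℂ) Q v i).symm
  have : ((Q.map (algebraMap ℝ ℂ)).mulVec ((fun r : ℝ => (r : ℂ)) ∘ v)) i
      = ((Q.mulVec v i : ℝ) : ℂ) := by
    exact h
  rw [this, Complex.nnnorm_real]

lemma stmt18_aux_spec [Nonempty (Fin n)] (P : Matrix (Fin n) (Fin n) ℝ) (a C : ℝ)
    (x : Fin n → ℝ) (ha : 0 < a) (hC : 0 < C)
    (hgrow : ∀ k : ℕ, C * a ^ k ≤ ‖(P ^ k).mulVec x‖) :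
    a ≤ specRad P := by
  haveI : CompleteSpace (Matrix (Fin n) (Fin n) ℂ) :=
    FiniteDimensional.complete ℂ (Matrix (Fin n) (Fin n) ℂ)
  haveI : Nontrivial (Matrix (Fin n) (Fin n) ℂ) := by
    refine nontrivial_of_ne 0 1 fun h => ?_
    have i := Classical.arbitrary (Fin n)
    have := congrFun (congrFun h i) i
    simp [Matrix.one_apply_eq] at this
  have hx0 : 0 < ‖x‖ := by
    have := hgrow 0
    simp only [pow_zero, mul_one, Matrix.one_mulVec] at this
    linarith
  set Pc := P.map (algebraMap ℝ ℂ) with hPc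
  have hPck : ∀ k : ℕ, Pc ^ k = (P ^ k).map (algebraMap ℝ ℂ) := by
    intro k
    rw [hPc, ← RingHom.mapMatrix_apply, ← RingHom.mapMatrix_apply, ← map_pow]
  set C' := C / ‖x‖ with hC'
  have hC'0 : 0 < C' := div_pos hC hx0
  have hop : ∀ k : ℕ, C' * a ^ k ≤ ‖Pc ^ k‖ := by
    intro k
    have h1 : ‖(Pc ^ k).mulVec ((fun r : ℝ => (r : ℂ)) ∘ x)‖ = ‖(P ^ k).mulVec x‖ := by
      rw [hPck]; exact stmt18_norm_map_mulVec _ _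
    have h2 := Matrix.linfty_opNorm_mulVec (Pc ^ k) ((fun r : ℝ => (r : ℂ)) ∘ x)
    have h3 : ‖(fun r : ℝ => (r : ℂ)) ∘ x‖ = ‖x‖ := by
      simp only [Pi.norm_def, Pi.nnnorm_def]
      congr 1
      exact Finset.sup_congr rfl fun i _ => Complex.nnnorm_real _
    rw [h1, h3] at h2
    have h4 := le_trans (hgrow k) h2
    rw [hC', div_mul_eq_mul_div, div_le_iff₀ hx0]
    linarith
  have hgel := spectrum.pow_norm_pow_one_div_tendsto_nhds_spectralRadius Pc
  have h1lim : Tendsto (fun k : ℕ => C' ^ ((1 : ℝ)/(k:ℝ)) * a) atTop (𝓝 a) := by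
    have h0 : Tendsto (fun k : ℕ => (1 : ℝ)/(k:ℝ)) atTop (𝓝 0) :=
      tendsto_one_div_atTop_nhds_zero_nat
    have hc : ContinuousAt (fun t : ℝ => C' ^ t) 0 :=
      Real.continuousAt_const_rpow hC'0.ne'
    have := (hc.tendsto.comp h0)
    simp only [Real.rpow_zero] at this
    simpa using this.mul_const a
  have hlhs : Tendsto (fun k : ℕ => ENNReal.ofReal (C' ^ ((1:ℝ)/(k:ℝ)) * a)) atTop
      (𝓝 (ENNReal.ofReal a)) :=
    (ENNReal.continuous_ofReal.tendsto a).comp h1lim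
  have hle : ∀ᶠ k : ℕ in atTop,
      ENNReal.ofReal (C' ^ ((1:ℝ)/(k:ℝ)) * a) ≤ ENNReal.ofReal (‖Pc ^ k‖ ^ ((1:ℝ)/(k:ℝ))) := by
    filter_upwards [eventually_ge_atTop 1] with k hk
    apply ENNReal.ofReal_le_ofReal
    have hnn : (0:ℝ) ≤ C' * a ^ k := by positivity
    have := Real.rpow_le_rpow hnn (hop k) (by positivity : (0:ℝ) ≤ (1:ℝ)/(k:ℝ))
    calc C' ^ ((1:ℝ)/(k:ℝ)) * a = (C' * a ^ k) ^ ((1:ℝ)/(k:ℝ)) := by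
          rw [Real.mul_rpow hC'0.le (by positivity), ← Real.rpow_natCast a k,
            ← Real.rpow_mul ha.le]
          have hk0 : (k:ℝ) ≠ 0 := Nat.cast_ne_zero.mpr (by omega)
          rw [mul_one_div, div_self hk0, Real.rpow_one]
      _ ≤ ‖Pc ^ k‖ ^ ((1:ℝ)/(k:ℝ)) := this
  have key : ENNReal.ofReal a ≤ spectralRadius ℂ Pc :=
    le_of_tendsto_of_tendsto hlhs hgel hle
  obtain ⟨z, hz, hzr⟩ := spectrum.exists_nnnorm_eq_spectralRadius (a := Pc)
  rw [← hzr] at key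
  have haz : a ≤ ‖z‖ := by
    have := (ENNReal.ofReal_le_iff_le_toReal ENNReal.coe_ne_top).mp key
    simpa using this
  have hbdd : BddAbove ((fun z : ℂ => ‖z‖) '' spectrum ℂ Pc) :=
    ((spectrum.isCompact Pc).image continuous_norm).bddAbove
  have hmem : ‖z‖ ∈ (fun z : ℂ => ‖z‖) '' spectrum ℂ Pc := ⟨z, hz, rfl⟩
  show a ≤ sSup ((fun z : ℂ => ‖z‖) '' spectrum ℂ Pc)
  calc a ≤ ‖z‖ := haz
    _ = ‖z‖ := rfl
    _ ≤ sSup ((fun z : ℂ => ‖z‖) '' spectrum ℂ Pc) := le_csSup hbdd hmem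

end Stmt18Aux

/-- for `K`-irreducible `A ∈ π(K)` with compact base `B`, there is
`δ > 0` such that `Sx ∈ cB` for `S ∈ π(K)`, `x ∈ B`, `c > 0` forces
`r((I+A)^(n-1) S) > δ c`. -/
theorem stmt18 (K B : Set (Fin n → ℝ)) (hK : IsProperCone K)
    (hB : IsCompactBase K B)
    (A : Matrix (Fin n) (Fin n) ℝ) (hA : MapsCone A K)
    (hirr : ∀ x ∈ K, x ≠ 0 → ((1 + A) ^ (n - 1)).mulVec x ∈ interior K) :
    ∃ δ : ℝ, 0 < δ ∧ ∀ S : Matrix (Fin n) (Fin n) ℝ, MapsCone S K →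
      ∀ c : ℝ, 0 < c → ∀ x ∈ B, (∃ y ∈ B, S.mulVec x = c • y) →
        δ * c < specRad ((1 + A) ^ (n - 1) * S) := by
  classical
  rcases B.eq_empty_or_nonempty with hBe | hBne
  · exact ⟨1, one_pos, by simp [hBe]⟩
  obtain ⟨b₀, hb₀⟩ := hBne
  obtain ⟨hconv, hsmul, hpoint, hclosed, hint⟩ := hK
  obtain ⟨hBcomp, h0B, hKeq⟩ := hB
  have hBK : ∀ b ∈ B, b ∈ K := fun b hb => by
    rw [hKeq]; exact ⟨1, one_pos.le, b, hb, (one_smul ℝ b).symm⟩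
  have hbne : ∀ b ∈ B, b ≠ 0 := fun b hb h => h0B (subset_closure (h ▸ hb))
  have hn : 0 < n := by
    by_contra h
    push_neg at h
    have hn0 : n = 0 := by omega
    subst hn0
    exact hbne b₀ hb₀ (funext fun i => i.elim0)
  haveI : Nonempty (Fin n) := ⟨⟨0, hn⟩⟩
  have h0K : (0 : Fin n → ℝ) ∈ K := by
    have : (0 : Fin n → ℝ) ∈ K ∩ (-K) := by rw [hpoint]; rfl
    exact this.1
  have hsmul' : ∀ r : ℝ, 0 ≤ r → ∀ u ∈ K, r • u ∈ K := by
    intro r hr u hu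
    rcases eq_or_lt_of_le hr with h | h
    · rw [← h, zero_smul]; exact h0K
    · exact hsmul r h u hu
  have hadd : ∀ u ∈ K, ∀ v ∈ K, u + v ∈ K := by
    intro u hu v hv
    have hmid := hconv hu hv (by norm_num : (0:ℝ) ≤ 1/2) (by norm_num : (0:ℝ) ≤ 1/2)
      (by norm_num : (1:ℝ)/2 + 1/2 = 1)
    have h2 := hsmul 2 (by norm_num) _ hmid
    convert h2 using 1
    module
  -- the matrix M
  set M := (1 + A) ^ (n - 1) with hM
  have hMK : ∀ z ∈ K, M.mulVec z ∈ K := by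
    intro z hz
    by_cases hz0 : z = 0
    · rw [hz0, Matrix.mulVec_zero]; exact h0K
    · exact interior_subset (hirr z hz hz0)
  -- tube lemma: get δ0
  have hml : Continuous fun v : Fin n → ℝ => M.mulVec v := by
    have := LinearMap.continuous_of_finiteDimensional M.mulVecLin
    exact this
  have hfc : Continuous fun p : ((Fin n → ℝ) × (Fin n → ℝ)) × ℝ =>
      M.mulVec p.1.2 - p.2 • p.1.1 :=
    (hml.comp continuous_fst.snd).sub (continuous_snd.smul continuous_fst.fst)
  have hU : IsOpen ((fun p : ((Fin n → ℝ) × (Fin n → ℝ)) × ℝ =>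
      M.mulVec p.1.2 - p.2 • p.1.1) ⁻¹' interior K) := isOpen_interior.preimage hfc
  have hsubU : (B ×ˢ B) ×ˢ ({0} : Set ℝ) ⊆ (fun p : ((Fin n → ℝ) × (Fin n → ℝ)) × ℝ =>
      M.mulVec p.1.2 - p.2 • p.1.1) ⁻¹' interior K := by
    rintro ⟨⟨x, y⟩, t⟩ ⟨⟨hx, hy⟩, ht⟩
    have ht0 : t = 0 := ht
    simp only [Set.mem_preimage, ht0, zero_smul, sub_zero]
    exact hirr y (hBK y hy) (hbne y hy)
  obtain ⟨u, v, hou, hov, hBu, h0v, huv⟩ :=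
    generalized_tube_lemma (hBcomp.prod hBcomp) isCompact_singleton hU hsubU
  obtain ⟨ε, hε, hball⟩ := Metric.isOpen_iff.mp hov 0 (h0v rfl)
  set δ0 := ε / 2 with hδ0def
  have hδ0 : 0 < δ0 := by positivity
  have hδ0v : δ0 ∈ v := hball (by
    simp only [Metric.mem_ball, Real.dist_eq, sub_zero, hδ0def]
    rw [abs_of_pos (by positivity)]
    linarith)
  have hkey : ∀ x ∈ B, ∀ y ∈ B, M.mulVec y - δ0 • x ∈ interior K := by
    intro x hx y hy
    exact huv (Set.mk_mem_prod (hBu (Set.mk_mem_prod hx hy)) hδ0v)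
  -- the compact set of two-point combinations and its distance to 0
  set g : ((Fin n → ℝ) × (Fin n → ℝ)) × ℝ → (Fin n → ℝ) :=
    fun p => p.2 • p.1.1 + (1 - p.2) • p.1.2 with hg
  have hgc : Continuous g :=
    (continuous_snd.smul continuous_fst.fst).add
      ((continuous_const.sub continuous_snd).smul continuous_fst.snd)
  set Cset := g '' ((B ×ˢ B) ×ˢ Icc (0:ℝ) 1) with hCset
  have hCcomp : IsCompact Cset :=
    (((hBcomp.prod hBcomp)).prod isCompact_Icc).image hgc
  have hCne : Cset.Nonempty := ⟨g ((b₀, b₀), 0),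
    Set.mem_image_of_mem _ (Set.mk_mem_prod (Set.mk_mem_prod hb₀ hb₀) ⟨le_refl _, zero_le_one⟩)⟩
  have h0C : (0 : Fin n → ℝ) ∉ Cset := by
    rintro ⟨⟨⟨x, b⟩, t⟩, ⟨⟨hx, hb⟩, ht⟩, hg0⟩
    simp only [hg] at hg0
    have hu : t • x ∈ K := hsmul' t ht.1 x (hBK x hx)
    have hw : (1 - t) • b ∈ K := hsmul' (1 - t) (by linarith [ht.2]) b (hBK b hb)
    have hmem : t • x ∈ K ∩ (-K) := ⟨hu, by
      rw [Set.mem_neg]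
      have : -(t • x) = (1 - t) • b := by
        rw [neg_eq_iff_add_eq_zero]; exact hg0
      rw [this]; exact hw⟩
    rw [hpoint] at hmem
    have htx0 : t • x = 0 := hmem
    rcases eq_or_lt_of_le ht.1 with h | h
    · have ht0 : t = 0 := h.symm
      have hb0 : b = 0 := by
        have h' := hg0
        rw [ht0] at h'
        simpa using h'
      exact hbne b hb hb0
    · have : x = 0 := by
        rcases smul_eq_zero.mp htx0 with h' | h'
        · exact absurd h' (ne_of_gt h)
        · exact h'
      exact hbne x hx this
  set d := Metric.infDist (0 : Fin n → ℝ) Cset with hd_def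
  have hd : 0 < d := (hCcomp.isClosed.notMem_iff_infDist_pos hCne).mp h0C
  have hdle : ∀ z ∈ Cset, d ≤ ‖z‖ := by
    intro z hz
    have h' := Metric.infDist_le_dist_of_mem (x := (0 : Fin n → ℝ)) hz
    rwa [dist_zero_left] at h'
  -- conclusion
  refine ⟨δ0 / 2, by positivity, ?_⟩
  rintro S hS c hc x hx ⟨y, hy, hxy⟩
  set a := δ0 * c with ha_def
  have ha : 0 < a := by positivity
  set P := (1 + A) ^ (n - 1) * S with hP
  have hPK : ∀ z ∈ K, P.mulVec z ∈ K := by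
    intro z hz
    rw [hP, ← Matrix.mulVec_mulVec]
    exact hMK _ (hS z hz)
  have hPx : P.mulVec x - a • x ∈ K := by
    have h1 : P.mulVec x = c • M.mulVec y := by
      rw [hP, ← Matrix.mulVec_mulVec, hxy, Matrix.mulVec_smul, hM]
    have h2 := hsmul c hc _ (interior_subset (hkey x hx y hy))
    have h3 : P.mulVec x - a • x = c • (M.mulVec y - δ0 • x) := by
      rw [h1, ha_def]; module
    rw [h3]; exact h2
  have hPk : ∀ k : ℕ, (P ^ k).mulVec x - a ^ k • x ∈ K := by
    intro k
    induction k with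
    | zero => simpa [pow_zero, Matrix.one_mulVec, sub_self] using h0K
    | succ k ih =>
      have heq : (P ^ (k + 1)).mulVec x = P.mulVec ((P ^ k).mulVec x) := by
        rw [pow_succ', Matrix.mulVec_mulVec]
      have hdecomp : (P ^ (k + 1)).mulVec x - a ^ (k + 1) • x
          = P.mulVec ((P ^ k).mulVec x - a ^ k • x) + a ^ k • (P.mulVec x - a • x) := by
        rw [heq, Matrix.mulVec_sub, Matrix.mulVec_smul, pow_succ a k]
        module
      rw [hdecomp]
      exact hadd _ (hPK _ ih) _ (hsmul' _ (by positivity) _ hPx)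
  have hgrow : ∀ k : ℕ, d * a ^ k ≤ ‖(P ^ k).mulVec x‖ := by
    intro k
    have hmem : (P ^ k).mulVec x - a ^ k • x ∈ K := hPk k
    rw [hKeq] at hmem
    obtain ⟨r, hr, b, hb, hrb⟩ := hmem
    have hrep : (P ^ k).mulVec x = a ^ k • x + r • b := by
      have := sub_eq_iff_eq_add.mp hrb
      rw [this]; abel
    set s := a ^ k + r with hs_def
    have hspos : 0 < s := by positivity
    set t := a ^ k / s with ht_def
    have ht01 : t ∈ Icc (0:ℝ) 1 := by
      constructor
      · positivity
      · rw [ht_def, div_le_one hspos]; linarith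
    have h1t : 1 - t = r / s := by
      rw [ht_def]
      field_simp
      rw [hs_def]; ring
    set z := t • x + (1 - t) • b with hz_def
    have hzC : z ∈ Cset := ⟨((x, b), t), Set.mk_mem_prod (Set.mk_mem_prod hx hb) ht01, rfl⟩
    have heqz : (P ^ k).mulVec x = s • z := by
      rw [hrep, hz_def, h1t, ht_def, smul_add, smul_smul, smul_smul,
        mul_div_cancel₀ _ hspos.ne', mul_div_cancel₀ _ hspos.ne']
    rw [heqz, norm_smul, Real.norm_eq_abs, abs_of_pos hspos]
    calc d * a ^ k ≤ ‖z‖ * a ^ k := by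
          have := hdle z hzC
          nlinarith [pow_pos ha k]
      _ ≤ s * ‖z‖ := by
          have h1 : a ^ k ≤ s := by rw [hs_def]; linarith
          nlinarith [norm_nonneg z, pow_pos ha k]
  have hfin : a ≤ specRad P := by
    refine stmt18_aux_spec P a d x ha hd ?_
    intro k
    have := hgrow k
    linarith
  calc δ0 / 2 * c < a := by rw [ha_def]; nlinarith
    _ ≤ specRad P := hfin
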